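/- Let n≥0 and r≥0 be integers, β=(β_1,…,β_m) a weak composition of n, and α=(α_1,…,α_k) a strong composition of n+r with k≥1 parts. Then D^{inv}_{r;β,α}(q) = Σ_S q^{Σ_{i=min(S)+1}^{m}(β_i−χ_S(i))} · D^{inv+}_{r;β−χ_S,α^-}(q), where the sum is over all subsets S of {1,…,m} with |S|=α_k and χ_S ≤ β componentwise, χ_S∈{0,1}^m is the indicator vector of S, β−χ_S is the componentwise difference, and α^-=(α_1,…,α_{k−1}). -/

import Mathlib

open scoped BigOperators

namespace omp

/-- The multiset `A(β) ∪ {0^r}`: the letter `i` (for `1 ≤ i ≤ m`) with multiplicity `β_i`,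
together with `r` copies of the letter `0`. -/
def content (r : ℕ) (β : List ℕ) : Multiset ℕ :=
  Multiset.replicate r 0 +
    ∑ i ∈ Finset.range β.length, Multiset.replicate (β.getD i 0) (i + 1)

/-- `π` is an ordered multiset partition of `A(β) ∪ {0^r}` into `k` (nonempty) blocks,
with `0` allowed anywhere: the set `OP^all_{r;β,k}`. -/
def IsOPall (r : ℕ) (β : List ℕ) (k : ℕ) (π : List (Finset ℕ)) : Prop :=
  π.length = k ∧ (∀ B ∈ π, B.Nonempty) ∧ (π.map Finset.val).sum = content r β

/-- Additionally, the last block does not contain `0`: the set `OP_{r;β,k}`. -/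
def IsOP (r : ℕ) (β : List ℕ) (k : ℕ) (π : List (Finset ℕ)) : Prop :=
  IsOPall r β k π ∧ 0 ∉ π.getLastD ∅

/-- Ordered multiset partitions of `A(β) ∪ {0^r}` with shape `α`: `OP^all_{r;β,α}`. -/
def IsOPallSh (r : ℕ) (β α : List ℕ) (π : List (Finset ℕ)) : Prop :=
  (∀ B ∈ π, B.Nonempty) ∧ (π.map Finset.val).sum = content r β ∧
    π.map Finset.card = α

/-- Shape `α` and last block avoiding `0`: `OP_{r;β,α}`. -/
def IsOPSh (r : ℕ) (β α : List ℕ) (π : List (Finset ℕ)) : Prop :=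
  IsOPallSh r β α π ∧ 0 ∉ π.getLastD ∅

/-- The `i`-th block (0-indexed). -/
def blk (π : List (Finset ℕ)) (i : ℕ) : Finset ℕ := π.getD i ∅

/-- `inv`: pairs of a letter `a` in block `B_i` and the minimum `b` of a later block `B_j`
with `a > b`. -/
def inv (π : List (Finset ℕ)) : ℕ :=
  ∑ i ∈ Finset.range π.length, ∑ j ∈ Finset.range π.length,
    if i < j then
      (@Finset.filter ℕ (fun (a : ℕ) => (blk π j).min < (a : WithBot ℕ))
          (fun _ => WithTop.decidableLT _ _) (blk π i)).card
    else 0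

/-- The word `σ(π)`: each block written in decreasing order, blocks concatenated. -/
def sigmaWord (π : List (Finset ℕ)) : List ℕ :=
  (π.map (fun B => (B.sort (· ≤ ·)).reverse)).flatten

/-- The word `ind(π) = 0^{|B_1|} 1^{|B_2|} ⋯ (k-1)^{|B_k|}`. -/
def indWord (π : List (Finset ℕ)) : List ℕ :=
  (π.zipIdx.map (fun p => List.replicate p.1.card p.2)).flatten

/-- The major index of a word (positions are 1-based). -/
def majW (w : List ℕ) : ℕ :=
  ∑ i ∈ Finset.range (w.length - 1),
    if w.getD (i + 1) 0 < w.getD i 0 then i + 1 else 0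

/-- `maj(π)`: the sum of `ind(π)_{i+1}` over descents `σ_i > σ_{i+1}` of `σ(π)`. -/
def maj (π : List (Finset ℕ)) : ℕ :=
  ∑ i ∈ Finset.range ((sigmaWord π).length - 1),
    if (sigmaWord π).getD (i + 1) 0 < (sigmaWord π).getD i 0 then
      (indWord π).getD (i + 1) 0
    else 0

/-- `dinv(π)`: primary and secondary diagonal inversions, where `B_i^h` is the `h`-th smallest
element of block `B_i` (here `h` is 0-indexed). -/
def dinv (π : List (Finset ℕ)) : ℕ :=
  ∑ i ∈ Finset.range π.length, ∑ j ∈ Finset.range π.length,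
    if i < j then
      ((Finset.range (blk π i).card).filter (fun h =>
          h < (blk π j).card ∧
            ((blk π j).sort (· ≤ ·)).getD h 0 < ((blk π i).sort (· ≤ ·)).getD h 0)).card +
      ((Finset.range (blk π i).card).filter (fun h =>
          h + 1 < (blk π j).card ∧
            ((blk π j).sort (· ≤ ·)).getD (h + 1) 0 < ((blk π i).sort (· ≤ ·)).getD h 0)).card
    else 0

/-- `miniword(π)`, built from right to left: the last block in increasing order; inductively,
if the word built so far begins with `s`, block `B_i` contributes its elements greater than `s`
in increasing order followed by its elements at most `s` in increasing order. -/
def miniword : List (Finset ℕ) → List ℕ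
  | [] => []
  | B :: rest =>
    match miniword rest with
    | [] => B.sort (· ≤ ·)
    | s :: w =>
        ((B.filter (fun x => s < x)).sort (· ≤ ·) ++
          (B.filter (fun x => x ≤ s)).sort (· ≤ ·)) ++ s :: w

/-- `minimaj(π) = maj(miniword(π))`. -/
def minimaj (π : List (Finset ℕ)) : ℕ := majW (miniword π)

/-- `D^{stat}_{r;β,k}(q) = Σ_{π ∈ OP_{r;β,k}} q^{stat(π)}` (the set is finite, so the
finite-support sum below is the intended polynomial). -/
noncomputable def D (r : ℕ) (β : List ℕ) (k : ℕ)
    (stat : List (Finset ℕ) → ℕ) : Polynomial ℕ :=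
  ∑ᶠ π ∈ {π | IsOP r β k π}, Polynomial.X ^ stat π

/-- `D^{stat+}_{r;β,k}(q) = Σ_{π ∈ OP^all_{r;β,k}} q^{stat(π)}`. -/
noncomputable def Dall (r : ℕ) (β : List ℕ) (k : ℕ)
    (stat : List (Finset ℕ) → ℕ) : Polynomial ℕ :=
  ∑ᶠ π ∈ {π | IsOPall r β k π}, Polynomial.X ^ stat π

/-- `D^{stat}_{r;β,α}(q)`, the shape-refined generating function. -/
noncomputable def DSh (r : ℕ) (β α : List ℕ)
    (stat : List (Finset ℕ) → ℕ) : Polynomial ℕ :=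
  ∑ᶠ π ∈ {π | IsOPSh r β α π}, Polynomial.X ^ stat π

/-- `D^{stat+}_{r;β,α}(q)`, the shape-refined generating function with `0` allowed
in the last block. -/
noncomputable def DallSh (r : ℕ) (β α : List ℕ)
    (stat : List (Finset ℕ) → ℕ) : Polynomial ℕ :=
  ∑ᶠ π ∈ {π | IsOPallSh r β α π}, Polynomial.X ^ stat π

end omp


namespace omp

/-- The list `β − χ_S`: subtract `1` from `β_i` (1-indexed) for each `i ∈ S`. -/
def subInd (β : List ℕ) (S : Finset ℕ) : List ℕ :=
  (List.range β.length).map (fun i => β.getD i 0 - if i + 1 ∈ S then 1 else 0)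

/-- The exponent `Σ_{i = min(S)+1}^{m} (β_i − χ_S(i))`. -/
def wExp (β : List ℕ) (S : Finset ℕ) : ℕ :=
  ∑ i ∈ @Finset.filter ℕ (fun (i : ℕ) => S.min < (i : WithBot ℕ))
      (fun _ => WithTop.decidableLT _ _) (Finset.Icc 1 β.length),
    (β.getD (i - 1) 0 - if i ∈ S then 1 else 0)

end omp



namespace omp

/-! ### Auxiliary lemmas -/

instance decLtAux (s : WithTop ℕ) (a : ℕ) : Decidable (s < (a : WithBot ℕ)) :=
  WithTop.decidableLT _ _

lemma filter_finset_sum (p : ℕ → Prop) [DecidablePred p] (s : Finset ℕ)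
    (f : ℕ → Multiset ℕ) :
    Multiset.filter p (∑ i ∈ s, f i) = ∑ i ∈ s, Multiset.filter p (f i) := by
  classical
  induction s using Finset.induction with
  | empty => simp
  | @insert _ _ h ih => rw [Finset.sum_insert h, Finset.sum_insert h, Multiset.filter_add, ih]

lemma card_finset_sum (s : Finset ℕ) (f : ℕ → Multiset ℕ) :
    Multiset.card (∑ i ∈ s, f i) = ∑ i ∈ s, Multiset.card (f i) := by
  classical
  induction s using Finset.induction with
  | empty => simp
  | @insert _ _ h ih => rw [Finset.sum_insert h, Finset.sum_insert h, Multiset.card_add, ih]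

lemma filter_replicate' (p : ℕ → Prop) [DecidablePred p] (n a : ℕ) :
    Multiset.filter p (Multiset.replicate n a) =
      if p a then Multiset.replicate n a else 0 := by
  split
  · next h => exact Multiset.filter_eq_self.2 fun b hb => (Multiset.eq_of_mem_replicate hb) ▸ h
  · next h => exact Multiset.filter_eq_nil.2 fun b hb => (Multiset.eq_of_mem_replicate hb) ▸ h

lemma subInd_length (β : List ℕ) (S : Finset ℕ) : (subInd β S).length = β.length := by
  simp [subInd]

lemma subInd_getD (β : List ℕ) (S : Finset ℕ) {i : ℕ} (hi : i < β.length) :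
    (subInd β S).getD i 0 = β.getD i 0 - (if i + 1 ∈ S then 1 else 0) := by
  rw [List.getD_eq_getElem _ _ (by simpa [subInd] using hi)]
  simp [subInd]

lemma count_content (r : ℕ) (β : List ℕ) {x : ℕ} (hx : 1 ≤ x) :
    Multiset.count x (content r β) = β.getD (x - 1) 0 := by
  classical
  rw [content, Multiset.count_add, Multiset.count_replicate, if_neg (by omega),
    Multiset.count_sum']
  have h : ∀ i ∈ Finset.range β.length,
      Multiset.count x (Multiset.replicate (β.getD i 0) (i + 1)) =
        if i = x - 1 then β.getD i 0 else 0 := by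
    intro i _
    rw [Multiset.count_replicate]
    have : (i + 1 = x) ↔ (i = x - 1) := by omega
    rw [if_congr this rfl rfl]
  rw [Finset.sum_congr rfl h, Finset.sum_ite_eq' (Finset.range β.length) (x - 1)
    (fun i => β.getD i 0)]
  by_cases hxm : x - 1 < β.length
  · rw [if_pos (Finset.mem_range.2 hxm), zero_add]
  · rw [if_neg (by simpa using hxm), List.getD_eq_default _ _ (by omega)]
    omega

lemma mem_content {r x : ℕ} {β : List ℕ} (hx : x ∈ content r β) : x ≤ β.length := by
  rcases Multiset.mem_add.1 hx with h | h
  · have := Multiset.eq_of_mem_replicate h; omega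
  · rcases Multiset.mem_sum.1 h with ⟨i, hi, hmem⟩
    have := Multiset.eq_of_mem_replicate hmem
    have := Finset.mem_range.1 hi
    omega

lemma content_split (r : ℕ) (β : List ℕ) (S : Finset ℕ)
    (hS : S ⊆ Finset.Icc 1 β.length) (hb : ∀ i ∈ S, 1 ≤ β.getD (i - 1) 0) :
    content r β = content r (subInd β S) + S.val := by
  classical
  have hval : S.val = ∑ i ∈ Finset.range β.length,
      (if i + 1 ∈ S then ({i + 1} : Multiset ℕ) else 0) := by
    rw [← Finset.sum_multiset_singleton S, ← Finset.sum_filter]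
    refine (Finset.sum_nbij' (fun i => i + 1) (fun j => j - 1) ?_ ?_ ?_ ?_ ?_).symm
    · intro i hi
      exact (Finset.mem_filter.1 hi).2
    · intro j hj
      have h1 := Finset.mem_Icc.1 (hS hj)
      refine Finset.mem_filter.2 ⟨Finset.mem_range.2 (by omega), ?_⟩
      have hj1 : j - 1 + 1 = j := by omega
      rw [hj1]
      exact hj
    · intro i _
      omega
    · intro j hj
      have h1 := Finset.mem_Icc.1 (hS hj)
      omega
    · intro i _
      rfl
  rw [content, content, subInd_length, hval, add_assoc, ← Finset.sum_add_distrib]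
  congr 1
  refine Finset.sum_congr rfl fun i hi => ?_
  have hi' := Finset.mem_range.1 hi
  rw [subInd_getD β S hi']
  by_cases hmem : i + 1 ∈ S
  · rw [if_pos hmem, if_pos hmem]
    have hb1 : 1 ≤ β.getD i 0 := by simpa using hb _ hmem
    rw [← Multiset.replicate_one (i + 1) (α := ℕ), ← Multiset.replicate_add]
    congr 1
    omega
  · rw [if_neg hmem, if_neg hmem, add_zero, Nat.sub_zero]

lemma blk_append_lt (π' : List (Finset ℕ)) (S : Finset ℕ) {i : ℕ} (h : i < π'.length) :
    blk (π' ++ [S]) i = blk π' i :=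
  List.getD_append _ _ _ _ h

lemma blk_append_last (π' : List (Finset ℕ)) (S : Finset ℕ) :
    blk (π' ++ [S]) π'.length = S := by
  rw [blk, List.getD_append_right _ _ _ _ le_rfl]
  simp

lemma sum_card_filter_blk (p : ℕ → Prop) [DecidablePred p] :
    ∀ π' : List (Finset ℕ),
      ∑ i ∈ Finset.range π'.length, ((blk π' i).filter p).card
        = Multiset.card (Multiset.filter p (π'.map Finset.val).sum)
  | [] => by simp
  | B :: t => by
    rw [List.length_cons, Finset.sum_range_succ', List.map_cons, List.sum_cons,
      Multiset.filter_add, Multiset.card_add]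
    have hsucc : ∀ i : ℕ, blk (B :: t) (i + 1) = blk t i := fun i => rfl
    have h0 : blk (B :: t) 0 = B := rfl
    simp only [hsucc, h0]
    rw [sum_card_filter_blk p t, add_comm]
    rfl

lemma inv_append (π' : List (Finset ℕ)) (S : Finset ℕ) :
    inv (π' ++ [S]) =
      inv π' + ∑ i ∈ Finset.range π'.length,
        ((blk π' i).filter (fun a : ℕ => S.min < (a : WithBot ℕ))).card := by
  set l := π'.length with hl
  have hlen : (π' ++ [S]).length = l + 1 := by simp [hl]
  rw [inv, hlen, Finset.sum_range_succ]
  have h1 : ∑ j ∈ Finset.range (l + 1),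
      (if l < j then ((blk (π' ++ [S]) l).filter
        (fun a : ℕ => (blk (π' ++ [S]) j).min < (a : WithBot ℕ))).card else 0) = 0 :=
    Finset.sum_eq_zero fun j hj => if_neg (by have := Finset.mem_range.1 hj; omega)
  rw [h1, add_zero]
  have h2 : ∀ i ∈ Finset.range l,
      (∑ j ∈ Finset.range (l + 1),
        if i < j then ((blk (π' ++ [S]) i).filter
          (fun a : ℕ => (blk (π' ++ [S]) j).min < (a : WithBot ℕ))).card else 0)
      = (∑ j ∈ Finset.range l,
          if i < j then ((blk π' i).filter
            (fun a : ℕ => (blk π' j).min < (a : WithBot ℕ))).card else 0)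
        + ((blk π' i).filter (fun a : ℕ => S.min < (a : WithBot ℕ))).card := by
    intro i hi
    have hi' := Finset.mem_range.1 hi
    rw [Finset.sum_range_succ, blk_append_last, blk_append_lt _ _ hi', if_pos hi']
    congr 1
    refine Finset.sum_congr rfl fun j hj => ?_
    have hj' := Finset.mem_range.1 hj
    rw [blk_append_lt _ _ hj']
  rw [Finset.sum_congr rfl h2, Finset.sum_add_distrib, inv]

lemma sum_Icc_one (m : ℕ) (f : ℕ → ℕ) :
    ∑ i ∈ Finset.Icc 1 m, f i = ∑ j ∈ Finset.range m, f (j + 1) := by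
  induction m with
  | zero => simp
  | succ n ih =>
      rw [Finset.sum_range_succ, ← ih, Finset.sum_Icc_succ_top (by omega)]

lemma coe_lt_withbot (s a : ℕ) :
    ((s : ℕ) : WithTop ℕ) < (a : WithBot ℕ) ↔ s < a := by
  show ((s : ℕ) : WithTop ℕ) < ((a : ℕ) : WithTop ℕ) ↔ s < a
  exact WithTop.coe_lt_coe

lemma card_filter_content_min (r : ℕ) (β : List ℕ) (S : Finset ℕ) (s : ℕ)
    (hmin : S.min = ((s : ℕ) : WithTop ℕ)) (hs : 1 ≤ s) :
    Multiset.card (Multiset.filter (fun a : ℕ => S.min < (a : WithBot ℕ))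
        (content r (subInd β S)))
      = wExp β S := by
  classical
  have hp0 : ¬ (S.min < ((0 : ℕ) : WithBot ℕ)) := by
    rw [hmin]
    intro h
    exact absurd ((coe_lt_withbot s 0).1 h) (by omega)
  rw [content, Multiset.filter_add, Multiset.card_add, filter_replicate', if_neg hp0,
    Multiset.card_zero, zero_add, filter_finset_sum, card_finset_sum, subInd_length]
  have h1 : ∀ i ∈ Finset.range β.length,
      Multiset.card (Multiset.filter (fun a : ℕ => S.min < (a : WithBot ℕ))
          (Multiset.replicate ((subInd β S).getD i 0) (i + 1)))
        = if s < i + 1 then β.getD i 0 - (if i + 1 ∈ S then 1 else 0) else 0 := by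
    intro i hi
    have hi' := Finset.mem_range.1 hi
    rw [filter_replicate', subInd_getD β S hi']
    have hcond : (S.min < ((i + 1 : ℕ) : WithBot ℕ)) ↔ s < i + 1 := by
      rw [hmin]; exact coe_lt_withbot s (i + 1)
    rw [if_congr hcond rfl rfl]
    split
    · rw [Multiset.card_replicate]
    · rw [Multiset.card_zero]
  rw [Finset.sum_congr rfl h1, wExp, Finset.sum_filter, sum_Icc_one]
  refine Finset.sum_congr rfl fun j _ => ?_
  have hcond : (S.min < ((j + 1 : ℕ) : WithBot ℕ)) ↔ s < j + 1 := by
    rw [hmin]; exact coe_lt_withbot s (j + 1)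
  rw [if_congr hcond rfl rfl]
  simp

lemma inv_concat (r : ℕ) (β : List ℕ) (S : Finset ℕ) (hne : S.Nonempty)
    (hS : S ⊆ Finset.Icc 1 β.length) (π' : List (Finset ℕ))
    (hsum : (π'.map Finset.val).sum = content r (subInd β S)) :
    inv (π' ++ [S]) = wExp β S + inv π' := by
  classical
  have hminmem := S.min'_mem hne
  have hs1 : 1 ≤ S.min' hne := (Finset.mem_Icc.1 (hS hminmem)).1
  have hmin : S.min = ((S.min' hne : ℕ) : WithTop ℕ) := (Finset.coe_min' hne).symm
  rw [inv_append, sum_card_filter_blk, hsum,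
    card_filter_content_min r β S (S.min' hne) hmin hs1, add_comm]

lemma finite_fixedLength (m : ℕ) :
    ∀ n : ℕ, {l : List (Finset ℕ) | l.length = n ∧ ∀ B ∈ l, B ⊆ Finset.range m}.Finite
  | 0 => Set.Finite.subset (Set.finite_singleton [])
      (fun l hl => by simp [List.length_eq_zero_iff.1 hl.1])
  | (n + 1) => by
      have hrec := finite_fixedLength m n
      have hpow : (↑((Finset.range m).powerset) : Set (Finset ℕ)).Finite :=
        (Finset.range m).powerset.finite_toSet
      refine Set.Finite.subset (Set.Finite.image2 (fun B t => B :: t) hpow hrec) ?_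
      rintro l ⟨hl, hB⟩
      cases l with
      | nil => simp at hl
      | cons B t =>
          exact ⟨B, Finset.mem_coe.2 (Finset.mem_powerset.2 (hB B List.mem_cons_self)), t,
            ⟨by simpa using hl, fun C hC => hB C (List.mem_cons_of_mem _ hC)⟩, rfl⟩

lemma finite_isOPallSh (r : ℕ) (β α : List ℕ) : {π | IsOPallSh r β α π}.Finite := by
  refine (finite_fixedLength (β.length + 1) α.length).subset ?_
  rintro π ⟨hne, hsum, hshape⟩
  refine ⟨by rw [← hshape]; simp, fun B hB x hx => ?_⟩
  have hle : B.val ≤ (π.map Finset.val).sum :=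
    List.le_sum_of_mem (List.mem_map_of_mem (f := Finset.val) hB)
  have hxc : x ∈ content r β := by
    rw [← hsum]; exact Multiset.mem_of_le hle hx
  exact Finset.mem_range.2 (by have := mem_content hxc; omega)

lemma getLastD_concat' (π' : List (Finset ℕ)) (S : Finset ℕ) :
    (π' ++ [S]).getLastD ∅ = S := by
  rw [List.getLastD_eq_getLast?, List.getLast?_eq_getLast (by simp),
    List.getLast_append]
  rfl

/-- Backward direction of the bijection. -/
lemma isOPSh_concat (r : ℕ) (β α : List ℕ) (hk : α ≠ []) (hαpos : ∀ a ∈ α, 0 < a)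
    (S : Finset ℕ) (hS : S ⊆ Finset.Icc 1 β.length) (hcard : S.card = α.getLastD 0)
    (hb : ∀ i ∈ S, 1 ≤ β.getD (i - 1) 0) (π' : List (Finset ℕ))
    (h' : IsOPallSh r (subInd β S) α.dropLast π') :
    IsOPSh r β α (π' ++ [S]) := by
  obtain ⟨hblocks, hsum, hshape⟩ := h'
  have hlastα : α.getLastD 0 = α.getLast hk := by
    rw [List.getLastD_eq_getLast?, List.getLast?_eq_getLast hk]; rfl
  have hScard : 0 < S.card := by
    rw [hcard, hlastα]; exact hαpos _ (List.getLast_mem hk)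
  refine ⟨⟨?_, ?_, ?_⟩, ?_⟩
  · intro B hB
    rcases List.mem_append.1 hB with h | h
    · exact hblocks B h
    · rw [List.mem_singleton.1 h]
      exact Finset.card_pos.1 hScard
  · rw [List.map_append, List.sum_append, hsum]
    simp only [List.map_cons, List.map_nil, List.sum_cons, List.sum_nil, add_zero]
    exact (content_split r β S hS hb).symm
  · rw [List.map_append, hshape]
    simp only [List.map_cons, List.map_nil]
    rw [hcard, hlastα]
    exact List.dropLast_append_getLast hk
  · rw [getLastD_concat']
    intro h0
    have := Finset.mem_Icc.1 (hS h0)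
    omega

end omp


namespace omp

lemma getLastD_concat'' {γ : Type*} (l : List γ) (x d : γ) :
    (l ++ [x]).getLastD d = x :=
  List.getLastD_concat

/-- Forward direction of the bijection: decomposing `π ∈ OP_{r;β,α}`. -/
lemma isOPSh_decompose (r : ℕ) (β α : List ℕ) (hk : α ≠ []) (π : List (Finset ℕ))
    (h : IsOPSh r β α π) :
    π.dropLast ++ [π.getLastD ∅] = π ∧
    (π.getLastD ∅).Nonempty ∧
    (π.getLastD ∅) ⊆ Finset.Icc 1 β.length ∧
    (π.getLastD ∅).card = α.getLastD 0 ∧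
    (∀ i ∈ π.getLastD ∅, 1 ≤ β.getD (i - 1) 0) ∧
    IsOPallSh r (subInd β (π.getLastD ∅)) α.dropLast π.dropLast := by
  classical
  obtain ⟨⟨hblocks, hsum, hshape⟩, h0⟩ := h
  have hπne : π ≠ [] := by
    intro h'
    apply hk
    rw [← hshape, h']
    rfl
  have hSdef : π.getLastD ∅ = π.getLast hπne := by
    rw [List.getLastD_eq_getLast?, List.getLast?_eq_getLast hπne]
    rfl
  set S := π.getLastD ∅ with hS
  set π' := π.dropLast with hπ'
  have heq : π' ++ [S] = π := by
    rw [hSdef]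
    exact List.dropLast_append_getLast hπne
  have hSmem : S ∈ π := by
    rw [hSdef]; exact List.getLast_mem hπne
  have hSne : S.Nonempty := hblocks S hSmem
  have hsplit : content r β = (π'.map Finset.val).sum + S.val := by
    rw [← hsum]
    conv_lhs => rw [← heq]
    rw [List.map_append, List.sum_append]
    simp
  have hSle : S.val ≤ content r β := by
    rw [hsplit]; exact le_add_self
  have h1S : ∀ i ∈ S, 1 ≤ i := by
    intro i hi
    rcases Nat.eq_zero_or_pos i with h0' | h0'
    · exact absurd (h0' ▸ hi) h0
    · exact h0'
  have hSsub : S ⊆ Finset.Icc 1 β.length := by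
    intro i hi
    have hic : i ∈ content r β := Multiset.mem_of_le hSle (by exact hi)
    exact Finset.mem_Icc.2 ⟨h1S i hi, mem_content hic⟩
  have hb : ∀ i ∈ S, 1 ≤ β.getD (i - 1) 0 := by
    intro i hi
    have hc : Multiset.count i S.val ≤ Multiset.count i (content r β) :=
      Multiset.count_le_of_le i hSle
    rw [Multiset.count_eq_one_of_mem S.nodup (by exact hi),
      count_content r β (h1S i hi)] at hc
    exact hc
  have hαeq : (π'.map Finset.card) ++ [S.card] = α := by
    rw [← hshape]
    conv_rhs => rw [← heq]
    rw [List.map_append]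
    rfl
  have hcard : S.card = α.getLastD 0 := by
    rw [← hαeq, getLastD_concat'']
  refine ⟨heq, hSne, hSsub, hcard, hb, ?_, ?_, ?_⟩
  · intro B hB
    exact hblocks B ((List.dropLast_sublist π).subset hB)
  · have hcsplit := content_split r β S hSsub hb
    rw [hcsplit] at hsplit
    exact (add_right_cancel hsplit.symm)
  · rw [List.map_dropLast, hshape]

end omp


/-- The shape-refined recursion for `inv`:
`D^{inv}_{r;β,α} = Σ_S q^{Σ_{i=min(S)+1}^m (β_i − χ_S(i))} · D^{inv+}_{r;β−χ_S,α^-}`,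
summed over `S ⊆ {1,…,m}` with `|S| = α_k` and `χ_S ≤ β`. -/
theorem inv_shape_recursion (n r : ℕ) (β α : List ℕ) (hβ : β.sum = n)
    (hα : α.sum = n + r) (hαpos : ∀ a ∈ α, 0 < a) (hk : α ≠ []) :
    omp.DSh r β α omp.inv =
      ∑ S ∈ (Finset.Icc 1 β.length).powerset.filter
          (fun S => S.card = α.getLastD 0 ∧ ∀ i ∈ S, 1 ≤ β.getD (i - 1) 0),
        Polynomial.X ^ omp.wExp β S *
          omp.DallSh r (omp.subInd β S) α.dropLast omp.inv := by
  classical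
  have hfinA : {π | omp.IsOPSh r β α π}.Finite :=
    (omp.finite_isOPallSh r β α).subset (fun π h => h.1)
  have hfin : ∀ S : Finset ℕ,
      {π | omp.IsOPallSh r (omp.subInd β S) α.dropLast π}.Finite :=
    fun S => omp.finite_isOPallSh _ _ _
  rw [omp.DSh, finsum_mem_eq_finite_toFinset_sum _ hfinA]
  have hRHS : ∀ S ∈ (Finset.Icc 1 β.length).powerset.filter
      (fun S => S.card = α.getLastD 0 ∧ ∀ i ∈ S, 1 ≤ β.getD (i - 1) 0),
      Polynomial.X ^ omp.wExp β S * omp.DallSh r (omp.subInd β S) α.dropLast omp.inv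
        = ∑ π' ∈ (hfin S).toFinset,
            Polynomial.X ^ (omp.wExp β S) * Polynomial.X ^ omp.inv π' := by
    intro S _
    rw [omp.DallSh, finsum_mem_eq_finite_toFinset_sum _ (hfin S), Finset.mul_sum]
  rw [Finset.sum_congr rfl hRHS, Finset.sum_sigma']
  refine Finset.sum_nbij'
    (fun π => (⟨π.getLastD ∅, π.dropLast⟩ :
      Σ _ : Finset ℕ, List (Finset ℕ)))
    (fun x => x.2 ++ [x.1]) ?_ ?_ ?_ ?_ ?_
  · intro π hπ
    have hmem : omp.IsOPSh r β α π := (hfinA.mem_toFinset).1 hπ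
    obtain ⟨heq, hSne, hSsub, hcard, hb, hOP⟩ :=
      omp.isOPSh_decompose r β α hk π hmem
    refine Finset.mem_sigma.2 ⟨Finset.mem_filter.2
      ⟨Finset.mem_powerset.2 hSsub, hcard, hb⟩, ?_⟩
    exact (hfin _).mem_toFinset.2 hOP
  · rintro ⟨S, π'⟩ hx
    obtain ⟨hT, hπ'⟩ := Finset.mem_sigma.1 hx
    obtain ⟨hpow, hcard, hb⟩ := Finset.mem_filter.1 hT
    exact hfinA.mem_toFinset.2
      (omp.isOPSh_concat r β α hk hαpos S (Finset.mem_powerset.1 hpow) hcard hb π'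
        ((hfin S).mem_toFinset.1 hπ'))
  · intro π hπ
    have hmem : omp.IsOPSh r β α π := (hfinA.mem_toFinset).1 hπ
    obtain ⟨heq, _⟩ := omp.isOPSh_decompose r β α hk π hmem
    exact heq
  · rintro ⟨S, π'⟩ hx
    simp [omp.getLastD_concat'']
  · intro π hπ
    have hmem : omp.IsOPSh r β α π := (hfinA.mem_toFinset).1 hπ
    obtain ⟨heq, hSne, hSsub, hcard, hb, hOP⟩ :=
      omp.isOPSh_decompose r β α hk π hmem
    conv_lhs => rw [← heq]
    rw [omp.inv_concat r β _ hSne hSsub _ hOP.2.1, pow_add]
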